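/- Let G be a finite p-group and H a non-abelian normal subgroup of G contained in γ_i(G). Then |H| ≥ p^{i+2}. -/

import Mathlib

open Subgroup

/-- `⁅Z_{n+1}, G⁆ ≤ Z_n`. -/
lemma ucs_comm_top_le {G : Type*} [Group G] (n : ℕ) :
    ⁅Subgroup.upperCentralSeries G (n + 1), (⊤ : Subgroup G)⁆ ≤ Subgroup.upperCentralSeries G n := by
  rw [Subgroup.commutator_le]
  intro g hg h _
  exact Subgroup.mem_upperCentralSeries_succ_iff.mp hg h

/-- Key lemma: `⁅γ_{k+1}(G), Z_{k+1}(G)⁆ = 1`. -/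
lemma lcs_ucs_commutator_eq_bot : ∀ (k : ℕ) (G : Type*) [Group G],
    ⁅(⊤ : Subgroup G).lowerCentralSeries k, Subgroup.upperCentralSeries G (k + 1)⁆ = ⊥ := by
  intro k
  induction k with
  | zero =>
    intro G _
    rw [Subgroup.lowerCentralSeries_zero, zero_add, Subgroup.upperCentralSeries_one,
      Subgroup.commutator_eq_bot_iff_le_centralizer]
    intro g _
    rw [Subgroup.mem_centralizer_iff]
    intro y hy
    exact (Subgroup.mem_center_iff.mp hy g).symm
  | succ k ih =>
    intro G _
    have hcen : ⁅(⊤ : Subgroup G).lowerCentralSeries k, Subgroup.upperCentralSeries G (k + 2)⁆ ≤ center G := by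
      have hker : center G = (QuotientGroup.mk' (center G)).ker := (QuotientGroup.ker_mk' _).symm
      rw [hker, ← Subgroup.map_eq_bot_iff, Subgroup.map_commutator]
      refine le_bot_iff.mp (le_trans (Subgroup.commutator_mono ?_ ?_)
        (le_of_eq (ih (G ⧸ center G))))
      · exact Subgroup.lowerCentralSeries.map _ k
      · rw [← Subgroup.comap_upperCentralSeries_quotient_center (k + 1)]
        exact Subgroup.map_comap_le _ _
    have hrfl : (⊤ : Subgroup G).lowerCentralSeries (k + 1) = ⁅(⊤ : Subgroup G).lowerCentralSeries k, ⊤⁆ := rfl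
    rw [hrfl]
    apply Subgroup.commutator_commutator_eq_bot_of_rotate
    · -- ⁅⁅⊤, Z_{k+2}⁆, γ_{k+1}⁆ = ⊥
      rw [Subgroup.commutator_comm (⊤ : Subgroup G)]
      refine le_bot_iff.mp (le_trans (Subgroup.commutator_mono (ucs_comm_top_le (k + 1)) le_rfl) ?_)
      rw [Subgroup.commutator_comm]
      exact le_of_eq (ih G)
    · -- ⁅⁅Z_{k+2}, γ_{k+1}⁆, ⊤⁆ = ⊥
      rw [Subgroup.commutator_comm (Subgroup.upperCentralSeries G (k + 2))]
      refine le_bot_iff.mp (le_trans (Subgroup.commutator_mono hcen le_rfl) ?_)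
      rw [le_bot_iff, Subgroup.commutator_eq_bot_iff_le_centralizer]
      intro g hg
      rw [Subgroup.mem_centralizer_iff]
      intro y _
      exact Subgroup.mem_center_iff.mp hg y

/-- A nontrivial normal subgroup of a finite `p`-group meets the center nontrivially. -/
lemma normal_meets_center {p : ℕ} (hp : p.Prime) {G : Type*} [Group G] [Finite G]
    (hG : IsPGroup p G) (N : Subgroup G) [hN : N.Normal] (hbot : N ≠ ⊥) :
    ∃ x : G, x ∈ N ∧ x ∈ Subgroup.center G ∧ x ≠ 1 := by
  haveI := Fact.mk hp
  have hNp : IsPGroup p N := hG.to_subgroup N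
  have hNnt : Nontrivial N := (Subgroup.nontrivial_iff_ne_bot N).mpr hbot
  obtain ⟨n, hn0, hcard⟩ := hNp.nontrivial_iff_card.mp hNnt
  have hdvd : p ∣ Nat.card N := hcard ▸ dvd_pow_self p hn0.ne'
  have hCA : IsPGroup p (ConjAct G) := hG.of_equiv ConjAct.toConjAct
  have h1 : (1 : N) ∈ MulAction.fixedPoints (ConjAct G) N := fun g => smul_one g
  obtain ⟨b, hb, hb1⟩ := hCA.exists_fixed_point_of_prime_dvd_card_of_fixed_point (α := N) hdvd h1
  refine ⟨(b : G), b.2, ?_, ?_⟩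
  · rw [Subgroup.mem_center_iff]
    intro g
    have := hb (ConjAct.toConjAct g)
    have hval : ConjAct.toConjAct g • (b : G) = (b : G) := by
      rw [← ConjAct.Subgroup.val_conj_smul, this]
    rw [ConjAct.smul_def, ConjAct.ofConjAct_toConjAct] at hval
    calc g * b = (g * b * g⁻¹) * g := by group
    _ = b * g := by rw [hval]
  · intro h
    exact hb1 (Subtype.ext h).symm
lemma ucs_growth {p : ℕ} (hp : p.Prime) {G : Type*} [Group G] [Finite G]
    (hG : IsPGroup p G) (N : Subgroup G) [hN : N.Normal] :
    ∀ j : ℕ, (∀ j' < j, ¬N ≤ Subgroup.upperCentralSeries G j') →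
      p ^ j ≤ Nat.card (N ⊓ Subgroup.upperCentralSeries G j : Subgroup G) := by
  haveI := Fact.mk hp
  intro j
  induction j with
  | zero => intro _; simp only [pow_zero]; exact Nat.one_le_iff_ne_zero.mpr (Nat.card_pos).ne'
  | succ j ih =>
    intro hcond
    have hA := ih fun j' hj' => hcond j' (hj'.trans (Nat.lt_succ_self j))
    have hnle : ¬N ≤ Subgroup.upperCentralSeries G j := hcond j (Nat.lt_succ_self j)
    -- find x ∈ N ∩ Z_{j+1} \ Z_j
    set π := QuotientGroup.mk' (Subgroup.upperCentralSeries G j) with hπ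
    have hMn : (Subgroup.map π N).Normal := Subgroup.Normal.map hN π (QuotientGroup.mk'_surjective _)
    have hMbot : Subgroup.map π N ≠ ⊥ := by
      rw [Ne, Subgroup.map_eq_bot_iff, QuotientGroup.ker_mk']
      exact hnle
    obtain ⟨xq, hxqM, hxqc, hxq1⟩ :=
      normal_meets_center hp (hG.to_quotient _) (Subgroup.map π N) hMbot
    obtain ⟨x, hxN, rfl⟩ := hxqM
    have hxZ : x ∈ Subgroup.upperCentralSeries G (j + 1) := by
      rw [Subgroup.mem_upperCentralSeries_succ_iff]
      intro y
      rw [← QuotientGroup.ker_mk' (Subgroup.upperCentralSeries G j), MonoidHom.mem_ker]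
      have hcomm := Subgroup.mem_center_iff.mp hxqc (π y)
      simp only [commutatorElement_def, map_mul, map_inv]
      rw [← hcomm, ← hπ]
      group
    have hxnZ : x ∉ Subgroup.upperCentralSeries G j := by
      intro hmem
      apply hxq1
      rwa [← MonoidHom.mem_ker, QuotientGroup.ker_mk'] at *
    -- cardinalities
    have hle2 : N ⊓ Subgroup.upperCentralSeries G j ≤ N ⊓ Subgroup.upperCentralSeries G (j + 1) :=
      inf_le_inf_left N (Subgroup.upperCentralSeries_mono G (Nat.le_succ j))
    have hne : N ⊓ Subgroup.upperCentralSeries G j ≠ N ⊓ Subgroup.upperCentralSeries G (j + 1) := by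
      intro heq
      have : x ∈ N ⊓ Subgroup.upperCentralSeries G j := heq ▸ ⟨hxN, hxZ⟩
      exact hxnZ this.2
    have hdvd := Subgroup.card_dvd_of_le hle2
    obtain ⟨a, ha⟩ := (IsPGroup.iff_card.mp (hG.to_subgroup _) :
      ∃ n, Nat.card (N ⊓ Subgroup.upperCentralSeries G j : Subgroup G) = p ^ n)
    obtain ⟨b, hb⟩ := (IsPGroup.iff_card.mp (hG.to_subgroup _) :
      ∃ n, Nat.card (N ⊓ Subgroup.upperCentralSeries G (j + 1) : Subgroup G) = p ^ n)
    have hcardlt : Nat.card (N ⊓ Subgroup.upperCentralSeries G j : Subgroup G) <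
        Nat.card (N ⊓ Subgroup.upperCentralSeries G (j + 1) : Subgroup G) := by
      rcases lt_or_eq_of_le (Nat.le_of_dvd Nat.card_pos hdvd) with h | h
      · exact h
      · exact absurd (Subgroup.eq_of_le_of_card_ge hle2 h.ge) hne
    rw [ha, hb] at hcardlt
    have hab : a < b := (Nat.pow_lt_pow_iff_right hp.one_lt).mp hcardlt
    have hja : j ≤ a := (Nat.pow_le_pow_iff_right hp.one_lt).mp (hA.trans ha.le)
    rw [hb]
    exact Nat.pow_le_pow_right hp.pos (by omega)

/-- Hall: if `H` is a non-abelian normal subgroup of a finite `p`-group `G` with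
`H ≤ γ_i(G)` (here `γ_i(G) = (⊤ : Subgroup G).lowerCentralSeries (i-1)`), then `|H| ≥ p^(i+2)`. -/
theorem hall_order_bound {p : ℕ} (hp : p.Prime) {G : Type*} [Group G]
    [Finite G] (hG : IsPGroup p G) (H : Subgroup G) (hN : H.Normal)
    (hnonab : ⁅H, H⁆ ≠ ⊥) (i : ℕ) (hi : 1 ≤ i) (hle : H ≤ (⊤ : Subgroup G).lowerCentralSeries (i - 1)) :
    p ^ (i + 2) ≤ Nat.card H := by
  haveI := Fact.mk hp
  haveI := hN
  obtain ⟨j, rfl⟩ : ∃ j, i = j + 1 := ⟨i - 1, by omega⟩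
  simp only [Nat.add_sub_cancel] at hle
  -- Step 1 : H ⊓ Z_{j+1} centralizes H
  have hcent : H ⊓ Subgroup.upperCentralSeries G (j + 1) ≤ Subgroup.centralizer (H : Set G) := by
    intro x hx
    rw [Subgroup.mem_centralizer_iff]
    intro y hy
    have hcomm : y * x * y⁻¹ * x⁻¹ ∈ (⊥ : Subgroup G) := by
      rw [← lcs_ucs_commutator_eq_bot j G]
      exact Subgroup.commutator_mem_commutator (hle hy) hx.2
    rw [Subgroup.mem_bot] at hcomm
    have : y * x * y⁻¹ * x⁻¹ = 1 := hcomm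
    calc y * x = (y * x * y⁻¹ * x⁻¹) * (x * y) := by group
    _ = x * y := by rw [this]; group
  -- Step 2 : H is not inside any Z_{j'} for j' < j+1
  have hnotle : ∀ j' < j + 1, ¬H ≤ Subgroup.upperCentralSeries G j' := by
    intro j' hj' hcon
    apply hnonab
    rw [Subgroup.commutator_eq_bot_iff_le_centralizer]
    have : H ≤ Subgroup.upperCentralSeries G (j + 1) :=
      hcon.trans (Subgroup.upperCentralSeries_mono G (by omega))
    exact fun x hx => hcent ⟨hx, this hx⟩
  -- Step 3 : p ^ (j+1) ≤ |H ⊓ centralizer H|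
  have hgrow := ucs_growth hp hG H (j + 1) hnotle
  set C : Subgroup G := H ⊓ Subgroup.centralizer (H : Set G) with hC
  have hcardC : p ^ (j + 1) ≤ Nat.card C := by
    refine hgrow.trans (Nat.card_le_card_of_injective
      (Subgroup.inclusion (le_inf inf_le_left hcent)) (Subgroup.inclusion_injective _))
  -- Step 4 : index of the central part in H is at least p^2
  have hCH : C ≤ H := inf_le_left
  set C' : Subgroup ↥H := C.subgroupOf H with hC'
  have hcardC' : Nat.card C' = Nat.card C :=
    Nat.card_congr (Subgroup.subgroupOfEquivOfLe hCH).toEquiv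
  have hC'center : C' ≤ Subgroup.center ↥H := by
    intro x hx
    rw [Subgroup.mem_center_iff]
    intro y
    have hxc : (x : G) ∈ Subgroup.centralizer (H : Set G) := hx.2
    exact Subtype.ext (Subgroup.mem_centralizer_iff.mp hxc (y : G) y.2)
  haveI hC'norm : C'.Normal := by
    constructor
    intro n hn g
    have := hC'center hn
    rw [Subgroup.mem_center_iff] at this
    rw [this g, mul_assoc, mul_inv_cancel, mul_one]
    exact hn
  have hHp : IsPGroup p ↥H := hG.to_subgroup H
  have hq : IsPGroup p (↥H ⧸ C') := hHp.to_quotient C'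
  obtain ⟨m, hm⟩ := IsPGroup.iff_card.mp hq
  have hidx : C'.index = p ^ m := by rwa [Subgroup.index_eq_card]
  have hm2 : 2 ≤ m := by
    by_contra hlt
    push_neg at hlt
    have hcyc : IsCyclic (↥H ⧸ C') := by
      interval_cases m
      · have : Nat.card (↥H ⧸ C') = 1 := hm
        haveI : Subsingleton (↥H ⧸ C') := Nat.card_eq_one_iff_unique.mp this |>.1
        infer_instance
      · rw [pow_one] at hm
        exact isCyclic_of_prime_card hm
    apply hnonab
    have hcommH : ∀ a b : ↥H, a * b = b * a := by
      apply commutative_of_cyclic_center_quotient (QuotientGroup.mk' C')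
      rwa [QuotientGroup.ker_mk']
    rw [Subgroup.commutator_eq_bot_iff_le_centralizer]
    intro x hx
    rw [Subgroup.mem_centralizer_iff]
    intro y hy
    exact congrArg Subtype.val (hcommH ⟨y, hy⟩ ⟨x, hx⟩)
  -- Final count
  have hkey : Nat.card C' * C'.index = Nat.card ↥H := Subgroup.card_mul_index C'
  calc p ^ (j + 1 + 2) = p ^ (j + 1) * p ^ 2 := by ring
  _ ≤ Nat.card C' * C'.index := by
      apply Nat.mul_le_mul
      · rw [hcardC']; exact hcardC
      · rw [hidx]; exact Nat.pow_le_pow_right hp.pos hm2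
  _ = Nat.card H := hkey
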